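/- InfoNCE-type bound: let g(z,e) = p(z|e)/p(z) for strictly positive pmfs on finite sets, and let (E, Z) be jointly distributed with Z ~ p(·|E), together with |M| − 1 negative embeddings E* drawn independently with the same marginal as E. Then E[ log( g(Z,E) / (g(Z,E) + Σ_{k=1}^{|M|−1} g(Z,E*_k)) ) ] ≤ E[log g(Z,E)] − log |M| + log( E over the sample of (1 + (|M|−1)·(average of g(Z,E*)/g(Z,E))) ), and in particular using Jensen and E_{E*}[g(Z,E*)] ≤ 1/p(Z) bounds one obtains E[log(p(Z|E)/p(Z))] ≥ log |M| + E[ log( g(Z,E) / (g(Z,E) + Σ_k g(Z,E*_k)) ) ]. -/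

import Mathlib

open Finset

lemma sum_pi_prod {E : Type*} [Fintype E] {k : ℕ} (h : Fin k → E → ℝ) :
    ∑ f : Fin k → E, ∏ j, h j (f j) = ∏ j, ∑ x, h j x :=
  (Fintype.prod_sum h).symm

lemma sum_pi_prod_one {E : Type*} [Fintype E] {k : ℕ} (h : Fin k → E → ℝ)
    (h1 : ∀ j, ∑ x, h j x = 1) :
    ∑ f : Fin k → E, ∏ j, h j (f j) = 1 := by
  rw [sum_pi_prod]; simp [h1]

lemma symm_key {E : Type*} [Fintype E] (pE : E → ℝ) (hpE1 : ∑ e, pE e = 1)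
    (G : E → ℝ) (hG : ∀ e, 0 < G e) (n : ℕ) :
    ((n : ℝ) + 1) * ∑ t : Fin (n + 1) → E,
      (∏ j, pE (t j)) * (G (t 0) / ∑ j, G (t j)) = 1 := by
  have hE : Nonempty E := by
    by_contra h
    rw [not_nonempty_iff] at h
    simp [Finset.univ_eq_empty] at hpE1
  have hT : ∀ t : Fin (n + 1) → E, 0 < ∑ j, G (t j) :=
    fun t => Finset.sum_pos (fun j _ => hG (t j)) Finset.univ_nonempty
  have hA : ∀ i : Fin (n + 1),
      (∑ t : Fin (n + 1) → E, (∏ j, pE (t j)) * (G (t i) / ∑ j, G (t j)))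
        = ∑ t : Fin (n + 1) → E, (∏ j, pE (t j)) * (G (t 0) / ∑ j, G (t j)) := by
    intro i
    apply Fintype.sum_equiv ((Equiv.swap (0 : Fin (n + 1)) i).arrowCongr (Equiv.refl E))
    intro t
    simp only [Equiv.arrowCongr_apply, Equiv.coe_refl, Function.comp, Equiv.symm_swap,
      id_eq]
    rw [Equiv.prod_comp (Equiv.swap (0 : Fin (n+1)) i) (fun j => pE (t j)),
      Equiv.sum_comp (Equiv.swap (0 : Fin (n+1)) i) (fun j => G (t j)),
      Equiv.swap_apply_left]
  have key : ∑ i : Fin (n + 1), ∑ t : Fin (n + 1) → E,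
      (∏ j, pE (t j)) * (G (t i) / ∑ j, G (t j)) = 1 := by
    rw [Finset.sum_comm]
    have : ∀ t : Fin (n + 1) → E, ∑ i : Fin (n + 1),
        (∏ j, pE (t j)) * (G (t i) / ∑ j, G (t j)) = ∏ j, pE (t j) := by
      intro t
      rw [← Finset.mul_sum, ← Finset.sum_div, div_self (hT t).ne', mul_one]
    rw [Finset.sum_congr rfl (fun t _ => this t)]
    exact sum_pi_prod_one (fun _ => pE) (fun _ => hpE1)
  calc ((n : ℝ) + 1) * ∑ t : Fin (n + 1) → E, (∏ j, pE (t j)) * (G (t 0) / ∑ j, G (t j))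
      = ∑ i : Fin (n + 1), ∑ t : Fin (n + 1) → E,
          (∏ j, pE (t j)) * (G (t i) / ∑ j, G (t j)) := by
        rw [Finset.sum_congr rfl (fun i _ => hA i), Finset.sum_const, Finset.card_univ,
          Fintype.card_fin, nsmul_eq_mul]
        push_cast; ring
    _ = 1 := key

lemma sum_cons {E : Type*} [Fintype E] (n : ℕ) (F : (Fin (n + 1) → E) → ℝ) :
    ∑ t : Fin (n + 1) → E, F t = ∑ e, ∑ f : Fin n → E, F (Fin.cons e f) :=
  calc ∑ t : Fin (n + 1) → E, F t
      = ∑ q : E × (Fin n → E), F (Fin.cons q.1 q.2) :=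
        (Fintype.sum_equiv (Fin.consEquiv fun _ => E) _ _ (fun q => rfl)).symm
    _ = ∑ e, ∑ f : Fin n → E, F (Fin.cons e f) := Fintype.sum_prod_type _

/-- Density ratio `g(z,e) = p(z|e)/p(z)`. -/
noncomputable def gratio {E Z : Type*} [Fintype E]
    (pE : E → ℝ) (pc : E → Z → ℝ) (z : Z) (e : E) : ℝ :=
  pc e z / (∑ e', pE e' * pc e' z)

/-- InfoNCE-type bound (Theorem 4.2): an upper bound on the contrastive objective, and the
resulting lower bound `E[log(p(Z|E)/p(Z))] ≥ log |M| + E[log (g/(g+Σ g*))]`. -/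
theorem infonce_bound {E Z : Type*} [Fintype E] [Fintype Z]
    (pE : E → ℝ) (pc : E → Z → ℝ)
    (hpE : ∀ e, 0 < pE e) (hpc : ∀ e z, 0 < pc e z)
    (hpE1 : ∑ e, pE e = 1) (hpc1 : ∀ e, ∑ z, pc e z = 1)
    (m : ℕ) (hm : 1 ≤ m) :
    ((∑ e, ∑ z, ∑ f : Fin (m - 1) → E, (pE e * pc e z * ∏ k, pE (f k)) *
        Real.log (gratio pE pc z e
          / (gratio pE pc z e + ∑ k, gratio pE pc z (f k))))
      ≤ (∑ e, ∑ z, ∑ f : Fin (m - 1) → E, (pE e * pc e z * ∏ k, pE (f k)) *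
            Real.log (gratio pE pc z e))
        - Real.log m
        + Real.log (∑ e, ∑ z, ∑ f : Fin (m - 1) → E,
            (pE e * pc e z * ∏ k, pE (f k)) *
              (1 + (∑ k, gratio pE pc z (f k)) / gratio pE pc z e)))
    ∧ (Real.log m
        + (∑ e, ∑ z, ∑ f : Fin (m - 1) → E, (pE e * pc e z * ∏ k, pE (f k)) *
            Real.log (gratio pE pc z e
              / (gratio pE pc z e + ∑ k, gratio pE pc z (f k))))
      ≤ ∑ e, ∑ z, pE e * pc e z *
          Real.log (pc e z / (∑ e', pE e' * pc e' z))) := by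
  set n := m - 1 with hn
  have hm1 : (m : ℝ) = (n : ℝ) + 1 := by
    rw [hn, Nat.cast_sub hm]; push_cast; ring
  have hE : Nonempty E := by
    by_contra h
    rw [not_nonempty_iff] at h
    simp [Finset.univ_eq_empty] at hpE1
  set p : Z → ℝ := fun z => ∑ e', pE e' * pc e' z with hp_def
  have hp : ∀ z, 0 < p z :=
    fun z => Finset.sum_pos (fun e _ => mul_pos (hpE e) (hpc e z)) Finset.univ_nonempty
  set g : Z → E → ℝ := gratio pE pc with hg_def
  have hgr : ∀ z e, g z e = pc e z / p z := fun _ _ => rfl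
  have hg : ∀ z e, 0 < g z e := fun z e => div_pos (hpc e z) (hp z)
  have hpc_eq : ∀ e z, pc e z = g z e * p z :=
    fun e z => (div_mul_cancel₀ _ (hp z).ne').symm
  have hgsum : ∀ z, ∑ e, pE e * g z e = 1 := by
    intro z
    simp only [hgr, mul_div_assoc']
    rw [← Finset.sum_div, div_self (hp z).ne']
  have hpsum : ∑ z, p z = 1 := by
    show ∑ z, ∑ e', pE e' * pc e' z = 1
    rw [Finset.sum_comm]
    simp [← Finset.mul_sum, hpc1, hpE1]
  have hWf : ∑ f : Fin n → E, ∏ j, pE (f j) = 1 :=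
    sum_pi_prod_one (fun _ => pE) (fun _ => hpE1)
  have hS : ∀ z (f : Fin n → E), 0 ≤ ∑ k, g z (f k) :=
    fun z f => Finset.sum_nonneg fun k _ => (hg z (f k)).le
  have hT : ∀ z e (f : Fin n → E), 0 < g z e + ∑ k, g z (f k) :=
    fun z e f => add_pos_of_pos_of_nonneg (hg z e) (hS z f)
  -- total weight is 1
  have h1 : ∑ e, ∑ z, ∑ f : Fin n → E, (pE e * pc e z * ∏ k, pE (f k)) = 1 := by
    simp only [← Finset.mul_sum, hWf, mul_one, hpc1, hpE1]
  -- expected inverse of the contrast sum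
  have hWdiv : ∑ e, ∑ z, ∑ f : Fin n → E,
      (pE e * pc e z * ∏ k, pE (f k)) / (g z e + ∑ k, g z (f k))
        = 1 / ((n : ℝ) + 1) := by
    rw [Finset.sum_comm]
    have perz : ∀ z, ∑ e, ∑ f : Fin n → E,
        (pE e * pc e z * ∏ k, pE (f k)) / (g z e + ∑ k, g z (f k))
          = p z * (1 / ((n : ℝ) + 1)) := by
      intro z
      have hsym := symm_key pE hpE1 (g z) (hg z) n
      have hn1 : (0:ℝ) < (n : ℝ) + 1 := by positivity
      have hX : ∑ t : Fin (n + 1) → E,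
          (∏ j, pE (t j)) * (g z (t 0) / ∑ j, g z (t j)) = 1 / ((n : ℝ) + 1) := by
        rw [eq_div_iff hn1.ne', mul_comm]
        exact hsym
      have hcons := sum_cons n
        (fun t => (∏ j, pE (t j)) * (g z (t 0) / ∑ j, g z (t j)))
      rw [← hX, hcons, Finset.mul_sum]
      refine Finset.sum_congr rfl fun e _ => ?_
      rw [Finset.mul_sum]
      refine Finset.sum_congr rfl fun f _ => ?_
      simp only [Fin.prod_univ_succ, Fin.sum_univ_succ, Fin.cons_zero, Fin.cons_succ]
      rw [hpc_eq e z]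
      simp only [div_eq_mul_inv]
      ring
    rw [Finset.sum_congr rfl fun z _ => perz z, ← Finset.sum_mul, hpsum, one_mul]
  -- normalizing sum equals m
  have hC : ∑ e, ∑ z, ∑ f : Fin n → E, (pE e * pc e z * ∏ k, pE (f k)) *
      (1 + (∑ k, g z (f k)) / g z e) = (n : ℝ) + 1 := by
    have hone : ∀ z (k : Fin n), ∑ f : Fin n → E,
        (∏ j, pE (f j)) * g z (f k) = 1 := by
      intro z k
      have hrw : ∀ f : Fin n → E, (∏ j, pE (f j)) * g z (f k)
          = ∏ j, (pE (f j) * (if j = k then g z (f j) else 1)) := by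
        intro f
        rw [Finset.prod_mul_distrib, Finset.prod_ite_eq' Finset.univ k
          (fun j => g z (f j))]
        simp
      rw [Finset.sum_congr rfl fun f _ => hrw f]
      refine sum_pi_prod_one (fun j x => pE x * if j = k then g z x else 1) fun j => ?_
      by_cases hjk : j = k
      · subst hjk; simpa using hgsum z
      · simp [hjk, hpE1]
    have hfS : ∀ z, ∑ f : Fin n → E, (∏ j, pE (f j)) * ∑ k, g z (f k) = (n : ℝ) := by
      intro z
      simp only [Finset.mul_sum]
      rw [Finset.sum_comm]
      simp [hone z]
    have pw : ∀ (e : E) (z : Z) (f : Fin n → E),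
        (pE e * pc e z * ∏ k, pE (f k)) * (1 + (∑ k, g z (f k)) / g z e)
        = (pE e * pc e z * ∏ k, pE (f k))
          + (pE e * p z) * ((∏ k, pE (f k)) * ∑ k, g z (f k)) := by
      intro e z f
      rw [hpc_eq e z, mul_add, mul_one]
      congr 1
      field_simp [(hg z e).ne']
    simp only [pw, Finset.sum_add_distrib]
    rw [h1]
    have h2 : ∑ e, ∑ z, ∑ f : Fin n → E,
        (pE e * p z) * ((∏ k, pE (f k)) * ∑ k, g z (f k)) = (n : ℝ) := by
      rw [Finset.sum_congr rfl fun e _ => Finset.sum_congr rfl fun z _ => by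
        rw [← Finset.mul_sum, hfS z]]
      simp only [← Finset.sum_mul, ← Finset.mul_sum]
      rw [hpE1, hpsum]
      ring
    rw [h2]
    ring
  -- key: expected log of the contrast sum is at least log m
  have hD : Real.log ((n : ℝ) + 1) ≤ ∑ e, ∑ z, ∑ f : Fin n → E,
      (pE e * pc e z * ∏ k, pE (f k)) * Real.log (g z e + ∑ k, g z (f k)) := by
    have hn1 : (0:ℝ) < (n : ℝ) + 1 := by positivity
    have pt : ∀ (e : E) (z : Z) (f : Fin n → E),
        (pE e * pc e z * ∏ k, pE (f k)) * Real.log ((n : ℝ) + 1)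
          - (pE e * pc e z * ∏ k, pE (f k)) * Real.log (g z e + ∑ k, g z (f k))
        ≤ ((n : ℝ) + 1) * ((pE e * pc e z * ∏ k, pE (f k)) / (g z e + ∑ k, g z (f k)))
          - (pE e * pc e z * ∏ k, pE (f k)) := by
      intro e z f
      have hw : (0:ℝ) ≤ pE e * pc e z * ∏ k, pE (f k) := by
        have := (hpE e).le
        have := (hpc e z).le
        have : (0:ℝ) ≤ ∏ k, pE (f k) := Finset.prod_nonneg fun k _ => (hpE (f k)).le
        positivity
      have hTp := hT z e f
      have hlog := Real.log_le_sub_one_of_pos (div_pos hn1 hTp)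
      rw [Real.log_div hn1.ne' hTp.ne'] at hlog
      have hmul := mul_le_mul_of_nonneg_left hlog hw
      rw [mul_sub, mul_sub] at hmul
      have heq : (pE e * pc e z * ∏ k, pE (f k)) * (((n : ℝ) + 1) / (g z e + ∑ k, g z (f k)))
          = ((n : ℝ) + 1) * ((pE e * pc e z * ∏ k, pE (f k)) / (g z e + ∑ k, g z (f k))) := by
        simp only [div_eq_mul_inv]; ring
      rw [heq, mul_one] at hmul
      exact hmul
    have hsum : (∑ e, ∑ z, ∑ f : Fin n → E,
        ((pE e * pc e z * ∏ k, pE (f k)) * Real.log ((n : ℝ) + 1)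
          - (pE e * pc e z * ∏ k, pE (f k)) * Real.log (g z e + ∑ k, g z (f k))))
        ≤ ∑ e, ∑ z, ∑ f : Fin n → E,
          (((n : ℝ) + 1) * ((pE e * pc e z * ∏ k, pE (f k)) / (g z e + ∑ k, g z (f k)))
            - (pE e * pc e z * ∏ k, pE (f k))) :=
      Finset.sum_le_sum fun e _ => Finset.sum_le_sum fun z _ =>
        Finset.sum_le_sum fun f _ => pt e z f
    simp only [Finset.sum_sub_distrib, ← Finset.sum_mul, ← Finset.mul_sum] at hsum
    simp only [hpc1, hpE1, hWf, hWdiv, mul_one, one_mul] at hsum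
    have hinv : ((n : ℝ) + 1) * (1 / ((n : ℝ) + 1)) = 1 := by field_simp
    linarith [hsum]
  -- marginalize out the negatives in the log-ratio term
  have hB : ∑ e, ∑ z, ∑ f : Fin n → E, (pE e * pc e z * ∏ k, pE (f k)) *
      Real.log (g z e) = ∑ e, ∑ z, pE e * pc e z * Real.log (g z e) := by
    refine Finset.sum_congr rfl fun e _ => Finset.sum_congr rfl fun z _ => ?_
    rw [← Finset.sum_mul, ← Finset.mul_sum, hWf, mul_one]
  -- split the log of the quotient
  have hsplit : ∑ e, ∑ z, ∑ f : Fin n → E, (pE e * pc e z * ∏ k, pE (f k)) *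
      Real.log (g z e / (g z e + ∑ k, g z (f k)))
      = (∑ e, ∑ z, ∑ f : Fin n → E, (pE e * pc e z * ∏ k, pE (f k)) *
          Real.log (g z e))
        - ∑ e, ∑ z, ∑ f : Fin n → E, (pE e * pc e z * ∏ k, pE (f k)) *
          Real.log (g z e + ∑ k, g z (f k)) := by
    have pt : ∀ (z : Z) (e : E) (f : Fin n → E),
        Real.log (g z e / (g z e + ∑ k, g z (f k)))
          = Real.log (g z e) - Real.log (g z e + ∑ k, g z (f k)) :=
      fun z e f => Real.log_div (hg z e).ne' (hT z e f).ne'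
    simp only [pt, mul_sub, Finset.sum_sub_distrib]
  have hlogm : Real.log (m : ℝ) = Real.log ((n : ℝ) + 1) := by rw [hm1]
  constructor
  · rw [hsplit, hC, hlogm]
    have h0 : (0:ℝ) ≤ Real.log ((n : ℝ) + 1) := by
      apply Real.log_nonneg; norm_num
    nlinarith [hD]
  · show Real.log (m : ℝ) + _ ≤ ∑ e, ∑ z, pE e * pc e z * Real.log (g z e)
    rw [hsplit, hB, hlogm]
    linarith [hD]
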